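/- Let n ≥ 3 and set N = n(n−1)/2. There exists a constant C > 0 (depending only on n) with the following property. For every basis {σ^(a) : 1 ≤ a ≤ N} of so(n) that is orthonormal with respect to the inner product ⟨A,B⟩ = ½ tr(AᵀB), there exist real constants {k_{abc} : 1 ≤ a,b,c ≤ N} such that |k_{abc}| ≤ C for all a,b,c and σ^(a) = Σ_{b,c=1}^{N} k_{abc} [σ^(b), σ^(c)] for every a. -/

import Mathlib

open Matrix Finset

private def pairEquivAux (n : ℕ) : {p : Fin n × Fin n // p.1 < p.2} ≃ (Σ j : Fin n, Fin j.val) where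
  toFun p := ⟨p.1.2, ⟨p.1.1, p.2⟩⟩
  invFun x := ⟨(⟨x.2.1, x.2.2.trans x.1.2⟩, x.1), x.2.2⟩
  left_inv p := by ext <;> rfl
  right_inv x := by rcases x with ⟨j, i⟩; ext <;> rfl

private lemma card_ltPairs (n : ℕ) :
    Fintype.card {p : Fin n × Fin n // p.1 < p.2} = n * (n - 1) / 2 := by
  rw [Fintype.card_congr (pairEquivAux n), Fintype.card_sigma]
  simp only [Fintype.card_fin]
  rw [← Finset.sum_range_id n, Finset.sum_range fun i => i]

private noncomputable def Epr {n : ℕ} (i j : Fin n) : Matrix (Fin n) (Fin n) ℝ :=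
  Matrix.single i j 1 - Matrix.single j i 1

private lemma Epr_apply {n : ℕ} (i j u v : Fin n) :
    Epr i j u v = (if i = u ∧ j = v then (1:ℝ) else 0) - (if j = u ∧ i = v then 1 else 0) := by
  simp [Epr, Matrix.single, Matrix.sub_apply]

private lemma Epr_neg {n : ℕ} (i j : Fin n) : Epr j i = -Epr i j := by
  simp [Epr]

private lemma Epr_transpose {n : ℕ} (i j : Fin n) : (Epr i j)ᵀ = -Epr i j := by
  ext u v
  simp only [transpose_apply, Matrix.neg_apply, Epr_apply]
  by_cases h1 : i = u ∧ j = v <;> by_cases h2 : j = u ∧ i = v <;>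
    by_cases h3 : i = v ∧ j = u <;> by_cases h4 : j = v ∧ i = u <;>
    first
    | (exfalso; tauto)
    | simp [h1, h2, h3, h4, and_comm]

private lemma Epr_bracket {n : ℕ} {i m j : Fin n} (him : i ≠ m) (hmj : m ≠ j) (hij : i ≠ j) :
    Epr i m * Epr m j - Epr m j * Epr i m = Epr i j := by
  simp only [Epr, sub_mul, mul_sub]
  rw [Matrix.single_mul_single_of_ne (h := hmj), Matrix.single_mul_single_of_ne (h := him),
    Matrix.single_mul_single_of_ne (h := hij.symm), Matrix.single_mul_single_of_ne (h := hij),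
    Matrix.single_mul_single_of_ne (h := hmj.symm),
    Matrix.single_mul_single_of_ne (h := him.symm), Matrix.single_mul_single_same,
    Matrix.single_mul_single_same, one_mul]
  abel

section Main

variable {n : ℕ}

private lemma skew_diag {X : Matrix (Fin n) (Fin n) ℝ} (hX : Xᵀ = -X) (u : Fin n) :
    X u u = 0 := by
  have := congrFun (congrFun hX u) u
  simp only [transpose_apply, Matrix.neg_apply] at this
  linarith

private lemma skew_swap {X : Matrix (Fin n) (Fin n) ℝ} (hX : Xᵀ = -X) (u v : Fin n) :
    X v u = -X u v := by
  have := congrFun (congrFun hX u) v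
  simpa only [transpose_apply, Matrix.neg_apply] using this

/-- Trace formula: `½ tr(Xᵀ Y) = ∑_{u<v} X_{uv} Y_{uv}` for skew `X, Y`. -/
private lemma half_trace_eq {X Y : Matrix (Fin n) (Fin n) ℝ}
    (hX : Xᵀ = -X) (hY : Yᵀ = -Y) :
    (1 / 2 : ℝ) * Matrix.trace (Xᵀ * Y) =
      ∑ p : {p : Fin n × Fin n // p.1 < p.2}, X p.1.1 p.1.2 * Y p.1.1 p.1.2 := by
  classical
  have htr : Matrix.trace (Xᵀ * Y) = ∑ p : Fin n × Fin n, X p.1 p.2 * Y p.1 p.2 := by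
    rw [Matrix.trace]
    simp only [Matrix.diag, Matrix.mul_apply, transpose_apply]
    rw [Fintype.sum_prod_type]
    exact Finset.sum_comm
  have hdiagsub : ∑ p ∈ univ.filter (fun p : Fin n × Fin n => ¬ p.1 < p.2), X p.1 p.2 * Y p.1 p.2
      = ∑ p ∈ univ.filter (fun p : Fin n × Fin n => p.2 < p.1), X p.1 p.2 * Y p.1 p.2 := by
    symm
    apply Finset.sum_subset
    · intro p hp
      simp only [mem_filter, mem_univ, true_and] at hp ⊢
      exact not_lt_of_gt hp
    · intro p hp hnp
      simp only [mem_filter, mem_univ, true_and] at hp hnp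
      have : p.1 = p.2 := le_antisymm (not_lt.mp hnp) (not_lt.mp hp)
      rw [this, skew_diag hX, zero_mul]
  have hswap : ∑ p ∈ univ.filter (fun p : Fin n × Fin n => p.2 < p.1), X p.1 p.2 * Y p.1 p.2
      = ∑ p ∈ univ.filter (fun p : Fin n × Fin n => p.1 < p.2), X p.1 p.2 * Y p.1 p.2 := by
    apply Finset.sum_nbij' (fun p => (p.2, p.1)) (fun p => (p.2, p.1))
    · intro p hp; simp only [mem_filter, mem_univ, true_and] at hp ⊢; exact hp
    · intro p hp; simp only [mem_filter, mem_univ, true_and] at hp ⊢; exact hp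
    · intro p _; rfl
    · intro p _; rfl
    · intro p _
      rw [skew_swap hX, skew_swap hY]
      ring
  have hsplit := Finset.sum_filter_add_sum_filter_not (Finset.univ : Finset (Fin n × Fin n))
    (fun p => p.1 < p.2) (fun p => X p.1 p.2 * Y p.1 p.2)
  have hsubty : ∑ p : {p : Fin n × Fin n // p.1 < p.2}, X p.1.1 p.1.2 * Y p.1.1 p.1.2
      = ∑ p ∈ univ.filter (fun p : Fin n × Fin n => p.1 < p.2), X p.1 p.2 * Y p.1 p.2 :=
    (Finset.sum_subtype _ (by simp) (fun p : Fin n × Fin n => X p.1 p.2 * Y p.1 p.2)).symm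
  rw [htr, ← hsplit, hdiagsub, hswap, hsubty]
  ring

end Main

/-- Lemma 4.7. There is a constant `C > 0` depending only on `n`
such that every orthonormal basis `{σ^(a)}` of `so(n)` (with respect to the inner
product `⟨A,B⟩ = ½ tr(AᵀB)`) can be written as `σ^(a) = Σ k_{abc} [σ^(b), σ^(c)]`
with `|k_{abc}| ≤ C`. -/
theorem orthonormal_basis_so_n_bracket_representation (n : ℕ) (hn : 3 ≤ n) :
    ∃ C : ℝ, 0 < C ∧
      ∀ σ : Fin (n * (n - 1) / 2) → Matrix (Fin n) (Fin n) ℝ,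
        (∀ a, (σ a)ᵀ = -(σ a)) →
        (∀ a b, (1 / 2 : ℝ) * Matrix.trace ((σ a)ᵀ * σ b) = if a = b then 1 else 0) →
        ∃ k : Fin (n * (n - 1) / 2) → Fin (n * (n - 1) / 2) → Fin (n * (n - 1) / 2) → ℝ,
          (∀ a b c, |k a b c| ≤ C) ∧
          ∀ a, σ a = ∑ b, ∑ c, k a b c • (σ b * σ c - σ c * σ b) := by
  classical
  set N := n * (n - 1) / 2 with hNdef
  have hNpos : 0 < N := by
    have h2 : 2 ≤ n * (n - 1) := by nlinarith [Nat.sub_le n 1, Nat.le_sub_one_of_lt (show 1 < n by omega)]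
    exact Nat.div_pos (by omega) (by norm_num)
  refine ⟨(N : ℝ), by exact_mod_cast hNpos, ?_⟩
  intro σ hskew honb
  -- the equivalence between `Fin N` and pairs `i < j`
  have hcard : Fintype.card {p : Fin n × Fin n // p.1 < p.2} = N := card_ltPairs n
  let e : Fin N ≃ {p : Fin n × Fin n // p.1 < p.2} :=
    (Fintype.equivFinOfCardEq hcard).symm
  -- third index
  have hthird : ∀ i j : Fin n, ∃ m : Fin n, m ≠ i ∧ m ≠ j := by
    intro i j
    by_contra h
    push_neg at h
    have hsub : (Finset.univ : Finset (Fin n)) ⊆ {i, j} := by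
      intro m _
      rcases (em (m = i)) with h1 | h1
      · simp [h1]
      · simp [h m h1]
    have := Finset.card_le_card hsub
    simp only [Finset.card_univ, Fintype.card_fin] at this
    have : n ≤ 2 := le_trans this (Finset.card_insert_le _ _ |>.trans (by simp))
    omega
  choose mid hmid1 hmid2 using hthird
  -- entrywise orthonormality
  have horth : ∀ a b, (∑ s : Fin N,
      σ a (e s).1.1 (e s).1.2 * σ b (e s).1.1 (e s).1.2) = if a = b then 1 else 0 := by
    intro a b
    rw [Equiv.sum_comp e (fun p : {p : Fin n × Fin n // p.1 < p.2} =>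
      σ a p.1.1 p.1.2 * σ b p.1.1 p.1.2)]
    rw [← half_trace_eq (hskew a) (hskew b)]
    exact honb a b
  -- the change-of-basis matrix is orthogonal
  let M : Matrix (Fin N) (Fin N) ℝ := Matrix.of fun a s => σ a (e s).1.1 (e s).1.2
  have hM1 : M * Mᵀ = 1 := by
    ext a b
    rw [Matrix.mul_apply]
    simp only [M, Matrix.of_apply, transpose_apply, Matrix.one_apply]
    exact horth a b
  have hM2 : Mᵀ * M = 1 := mul_eq_one_comm.mp hM1
  have hdual : ∀ s t : Fin N, (∑ a : Fin N,
      σ a (e s).1.1 (e s).1.2 * σ a (e t).1.1 (e t).1.2) = if s = t then 1 else 0 := by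
    intro s t
    have := congrFun (congrFun hM2 s) t
    rw [Matrix.mul_apply] at this
    simpa only [M, Matrix.of_apply, transpose_apply, Matrix.one_apply] using this
  -- entry bound
  have hbd : ∀ a (u v : Fin n), |σ a u v| ≤ 1 := by
    have key : ∀ a (u v : Fin n), u < v → |σ a u v| ≤ 1 := by
      intro a u v huv
      rw [← sq_le_one_iff_abs_le_one]
      have h1 := horth a a
      rw [if_pos rfl] at h1
      calc σ a u v ^ 2
          = σ a (e (e.symm ⟨(u, v), huv⟩)).1.1 (e (e.symm ⟨(u, v), huv⟩)).1.2 ^ 2 := by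
            rw [e.apply_symm_apply]
        _ ≤ ∑ s : Fin N, σ a (e s).1.1 (e s).1.2 ^ 2 := by
            apply Finset.single_le_sum (f := fun s => σ a (e s).1.1 (e s).1.2 ^ 2)
            · intro s _; positivity
            · exact Finset.mem_univ _
        _ = 1 := by rw [← h1]; apply Finset.sum_congr rfl; intro s _; ring
    intro a u v
    rcases lt_trichotomy u v with h | h | h
    · exact key a u v h
    · rw [h, skew_diag (hskew a) v]; simp
    · rw [skew_swap (hskew a), abs_neg]; exact key a v u h
  -- completeness: expansion of `Epr u v` in the basis σ
  have hA : ∀ u v : Fin n, u < v → (∑ b : Fin N, σ b u v • σ b) = Epr u v := by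
    intro u v huv
    have entry : ∀ w x : Fin n, w < x →
        (∑ b : Fin N, σ b u v * σ b w x) = if u = w ∧ v = x then (1:ℝ) else 0 := by
      intro w x hwx
      have := hdual (e.symm ⟨(u, v), huv⟩) (e.symm ⟨(w, x), hwx⟩)
      simp only [e.apply_symm_apply] at this
      rw [this]
      congr 1
      rw [EmbeddingLike.apply_eq_iff_eq, Subtype.ext_iff, Prod.ext_iff]
    ext w x
    rw [Matrix.sum_apply]
    simp only [Matrix.smul_apply, smul_eq_mul, Epr_apply]
    rcases lt_trichotomy w x with h | h | h
    · rw [entry w x h]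
      have h2 : ¬ (v = w ∧ u = x) := by
        rintro ⟨h3, h4⟩
        rw [h3, h4] at huv
        exact lt_irrefl _ (huv.trans h)
      rw [if_neg h2, sub_zero]
    · have h1 : ¬ (u = w ∧ v = x) := by
        rintro ⟨h3, h4⟩
        rw [h3, h4] at huv
        exact absurd h (ne_of_lt huv)
      have h2 : ¬ (v = w ∧ u = x) := by
        rintro ⟨h3, h4⟩
        rw [h4, ← h, ← h3] at huv
        exact lt_irrefl _ huv
      rw [if_neg h1, if_neg h2, sub_zero]
      subst h
      apply Finset.sum_eq_zero
      intro b _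
      rw [skew_diag (hskew b) w, mul_zero]
    · have hneg : ∀ b : Fin N, σ b u v * σ b w x = -(σ b u v * σ b x w) := by
        intro b; rw [skew_swap (hskew b) x w]; ring
      rw [Finset.sum_congr rfl (fun b _ => hneg b), Finset.sum_neg_distrib]
      rw [entry x w h]
      have h1 : ¬ (u = w ∧ v = x) := by
        rintro ⟨h3, h4⟩
        rw [h3, h4] at huv
        exact lt_irrefl _ (h.trans huv)
      rw [if_neg h1, zero_sub]
      congr 1
      exact if_congr and_comm rfl rfl
  have hA' : ∀ u v : Fin n, u ≠ v → (∑ b : Fin N, σ b u v • σ b) = Epr u v := by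
    intro u v huv
    rcases lt_trichotomy u v with h | h | h
    · exact hA u v h
    · exact absurd h huv
    · have : ∀ b : Fin N, σ b u v • σ b = -((σ b v u) • σ b) := by
        intro b; rw [skew_swap (hskew b) v u]; simp
      rw [Finset.sum_congr rfl (fun b _ => this b), Finset.sum_neg_distrib, hA v u h, ← Epr_neg]
  -- expansion of skew matrices in the standard basis
  have hL1 : ∀ X : Matrix (Fin n) (Fin n) ℝ, Xᵀ = -X →
      X = ∑ s : Fin N, X (e s).1.1 (e s).1.2 • Epr (e s).1.1 (e s).1.2 := by
    intro X hX
    rw [Equiv.sum_comp e (fun p : {p : Fin n × Fin n // p.1 < p.2} =>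
      X p.1.1 p.1.2 • Epr p.1.1 p.1.2)]
    ext w x
    rw [Matrix.sum_apply]
    simp only [Matrix.smul_apply, smul_eq_mul, Epr_apply]
    rcases lt_trichotomy w x with h | h | h
    · rw [Fintype.sum_eq_single (⟨(w, x), h⟩ : {p : Fin n × Fin n // p.1 < p.2})]
      · have h2 : ¬ (x = w ∧ w = x) := by
          rintro ⟨h3, -⟩
          rw [h3] at h
          exact lt_irrefl _ h
        simp [h2]
      · intro p hp
        have h1 : ¬ (p.1.1 = w ∧ p.1.2 = x) := by
          intro hh
          exact hp (Subtype.ext (Prod.ext hh.1 hh.2))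
        have h2 : ¬ (p.1.2 = w ∧ p.1.1 = x) := by
          rintro ⟨h3, h4⟩
          have hlt := p.2
          rw [h3, h4] at hlt
          exact lt_irrefl _ (h.trans hlt)
        simp [h1, h2]
    · subst h
      rw [skew_diag hX w]
      symm
      apply Finset.sum_eq_zero
      intro p _
      have h1 : ¬ (p.1.1 = w ∧ p.1.2 = w) := by
        rintro ⟨h3, h4⟩
        have := p.2
        rw [h3, h4] at this
        exact lt_irrefl _ this
      simp [h1]
      intro h3 h4
      exact absurd ⟨h4, h3⟩ h1
    · rw [Fintype.sum_eq_single (⟨(x, w), h⟩ : {p : Fin n × Fin n // p.1 < p.2})]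
      · have h1 : ¬ (x = w ∧ w = x) := by
          rintro ⟨h3, -⟩
          rw [h3] at h
          exact lt_irrefl _ h
        rw [skew_swap hX x w]
        simp [h1]
      · intro p hp
        have h1 : ¬ (p.1.1 = w ∧ p.1.2 = x) := by
          rintro ⟨h3, h4⟩
          have := p.2
          rw [h3, h4] at this
          exact lt_irrefl _ (this.trans h)
        have h2 : ¬ (p.1.2 = w ∧ p.1.1 = x) := by
          intro hh
          exact hp (Subtype.ext (Prod.ext hh.2 hh.1))
        simp [h1, h2]
  -- definition of the structure constants
  refine ⟨fun a b c => ∑ s : Fin N,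
      σ a (e s).1.1 (e s).1.2 *
        (σ b (e s).1.1 (mid (e s).1.1 (e s).1.2) * σ c (mid (e s).1.1 (e s).1.2) (e s).1.2),
    ?_, ?_⟩
  · -- the bound
    intro a b c
    calc |∑ s : Fin N, σ a (e s).1.1 (e s).1.2 *
          (σ b (e s).1.1 (mid (e s).1.1 (e s).1.2) * σ c (mid (e s).1.1 (e s).1.2) (e s).1.2)|
        ≤ ∑ s : Fin N, |σ a (e s).1.1 (e s).1.2 *
          (σ b (e s).1.1 (mid (e s).1.1 (e s).1.2) * σ c (mid (e s).1.1 (e s).1.2) (e s).1.2)| :=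
          Finset.abs_sum_le_sum_abs _ _
      _ ≤ ∑ s : Fin N, (1 : ℝ) := by
          apply Finset.sum_le_sum
          intro s _
          rw [abs_mul, abs_mul]
          have b1 := hbd a (e s).1.1 (e s).1.2
          have b2 := hbd b (e s).1.1 (mid (e s).1.1 (e s).1.2)
          have b3 := hbd c (mid (e s).1.1 (e s).1.2) (e s).1.2
          have n1 := abs_nonneg (σ a (e s).1.1 (e s).1.2)
          have n2 := abs_nonneg (σ b (e s).1.1 (mid (e s).1.1 (e s).1.2))
          have n3 := abs_nonneg (σ c (mid (e s).1.1 (e s).1.2) (e s).1.2)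
          exact mul_le_one₀ b1 (by positivity) (mul_le_one₀ b2 n3 b3)
      _ = (N : ℝ) := by simp
  · -- the representation
    intro a
    have key : ∀ s : Fin N,
        (∑ b : Fin N, ∑ c : Fin N,
          (σ a (e s).1.1 (e s).1.2 *
            (σ b (e s).1.1 (mid (e s).1.1 (e s).1.2) *
              σ c (mid (e s).1.1 (e s).1.2) (e s).1.2)) •
            (σ b * σ c - σ c * σ b))
        = σ a (e s).1.1 (e s).1.2 • Epr (e s).1.1 (e s).1.2 := by
      intro s
      set i := (e s).1.1 with hi
      set j := (e s).1.2 with hj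
      set m := mid i j with hm
      have hij : i ≠ j := ne_of_lt (e s).2
      have him : i ≠ m := (hmid1 i j).symm
      have hmj : m ≠ j := hmid2 i j
      have expand : ∀ (y z : Fin N → ℝ),
          (∑ b : Fin N, ∑ c : Fin N, (y b * z c) • (σ b * σ c))
            = (∑ b : Fin N, y b • σ b) * (∑ c : Fin N, z c • σ c) := by
        intro y z
        rw [Finset.sum_mul]
        apply Finset.sum_congr rfl
        intro b _
        rw [Finset.mul_sum]
        apply Finset.sum_congr rfl
        intro c _
        rw [smul_mul_assoc, mul_smul_comm, smul_smul]
      have main : (∑ b : Fin N, ∑ c : Fin N,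
          ((σ b i m * σ c m j) • (σ b * σ c - σ c * σ b)))
          = Epr i m * Epr m j - Epr m j * Epr i m := by
        have e1 : (∑ b : Fin N, ∑ c : Fin N, (σ b i m * σ c m j) • (σ b * σ c))
            = Epr i m * Epr m j := by
          rw [expand (fun b => σ b i m) (fun c => σ c m j), hA' i m him, hA' m j hmj]
        have e2 : (∑ b : Fin N, ∑ c : Fin N, (σ b i m * σ c m j) • (σ c * σ b))
            = Epr m j * Epr i m := by
          rw [Finset.sum_comm]
          have hcomm : (∑ c : Fin N, ∑ b : Fin N, (σ b i m * σ c m j) • (σ c * σ b))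
              = ∑ c : Fin N, ∑ b : Fin N, (σ c m j * σ b i m) • (σ c * σ b) := by
            apply Finset.sum_congr rfl; intro c _
            apply Finset.sum_congr rfl; intro b _
            rw [mul_comm]
          rw [hcomm, expand (fun c => σ c m j) (fun b => σ b i m), hA' m j hmj, hA' i m him]
        simp only [smul_sub, Finset.sum_sub_distrib]
        rw [e1, e2]
      have pull : (∑ b : Fin N, ∑ c : Fin N,
          (σ a i j * (σ b i m * σ c m j)) • (σ b * σ c - σ c * σ b))
          = σ a i j • (∑ b : Fin N, ∑ c : Fin N,
            (σ b i m * σ c m j) • (σ b * σ c - σ c * σ b)) := by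
        rw [Finset.smul_sum]
        apply Finset.sum_congr rfl
        intro b _
        rw [Finset.smul_sum]
        apply Finset.sum_congr rfl
        intro c _
        rw [smul_smul]
      rw [pull, main, Epr_bracket him hmj hij]
    calc σ a
        = ∑ s : Fin N, σ a (e s).1.1 (e s).1.2 • Epr (e s).1.1 (e s).1.2 :=
          hL1 (σ a) (hskew a)
      _ = ∑ s : Fin N, (∑ b : Fin N, ∑ c : Fin N,
            (σ a (e s).1.1 (e s).1.2 *
              (σ b (e s).1.1 (mid (e s).1.1 (e s).1.2) *
                σ c (mid (e s).1.1 (e s).1.2) (e s).1.2)) •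
              (σ b * σ c - σ c * σ b)) := by
          apply Finset.sum_congr rfl
          intro s _
          exact (key s).symm
      _ = ∑ b : Fin N, ∑ c : Fin N, (∑ s : Fin N,
            σ a (e s).1.1 (e s).1.2 *
              (σ b (e s).1.1 (mid (e s).1.1 (e s).1.2) *
                σ c (mid (e s).1.1 (e s).1.2) (e s).1.2)) •
              (σ b * σ c - σ c * σ b) := by
          rw [Finset.sum_comm]
          apply Finset.sum_congr rfl
          intro b _
          rw [Finset.sum_comm]
          apply Finset.sum_congr rfl
          intro c _
          rw [Finset.sum_smul]
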